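/- For every positive integer n, the 4×4 determinant det_{0≤i,j≤3} binom(i+j+n, i-j+n) equals (4/(3!·5!))·(n+1)(n+2)^2(n+3)(2n+3)(2n+5). -/

import Mathlib

/-- `binom a b` for integer `b`: the binomial coefficient, zero when `b < 0` or `b > a`. -/
def binom (a : ℕ) (b : ℤ) : ℕ := if 0 ≤ b then a.choose b.toNat else 0

lemma key (n i j : ℕ) : (binom (i+j+n) ((i:ℤ)-(j:ℤ)+n)) = (i+j+n).choose (2*j) := by
  unfold binom
  by_cases h : (0:ℤ) ≤ (i:ℤ)-(j:ℤ)+n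
  · rw [if_pos h]
    have h1 : ((i:ℤ)-(j:ℤ)+n).toNat = (i+j+n) - (2*j) := by omega
    rw [h1]
    exact Nat.choose_symm (by omega)
  · rw [if_neg h]
    exact (Nat.choose_eq_zero_of_lt (by omega)).symm

lemma keyc (i j n : ℕ) (a : ℕ) (b : ℤ) (ha : a = i+j+n) (hb : b = (i:ℤ)-(j:ℤ)+n) :
    ((binom a b : ℕ) : ℚ) = (((i+j+n).choose (2*j) : ℕ) : ℚ) := by
  subst ha; subst hb; rw [key]

lemma c2 (m : ℕ) : ((m.choose 2 : ℕ) : ℚ) = m*(m-1)/2 := by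
  induction m with
  | zero => norm_num
  | succ k ih => rw [Nat.choose_succ_succ]; push_cast [ih, Nat.choose_one_right]; ring
lemma c3 (m : ℕ) : ((m.choose 3 : ℕ) : ℚ) = m*(m-1)*(m-2)/6 := by
  induction m with
  | zero => norm_num
  | succ k ih => rw [Nat.choose_succ_succ]; push_cast [ih, c2]; ring
lemma c4 (m : ℕ) : ((m.choose 4 : ℕ) : ℚ) = m*(m-1)*(m-2)*(m-3)/24 := by
  induction m with
  | zero => norm_num
  | succ k ih => rw [Nat.choose_succ_succ]; push_cast [ih, c3]; ring
lemma c5 (m : ℕ) : ((m.choose 5 : ℕ) : ℚ) = m*(m-1)*(m-2)*(m-3)*(m-4)/120 := by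
  induction m with
  | zero => norm_num
  | succ k ih => rw [Nat.choose_succ_succ]; push_cast [ih, c4]; ring
lemma c6 (m : ℕ) : ((m.choose 6 : ℕ) : ℚ) = m*(m-1)*(m-2)*(m-3)*(m-4)*(m-5)/720 := by
  induction m with
  | zero => norm_num
  | succ k ih => rw [Nat.choose_succ_succ]; push_cast [ih, c5]; ring

theorem binom_det_4 (n : ℕ) (hn : 0 < n) :
    Matrix.det (Matrix.of (fun i j : Fin 4 =>
        (binom ((i : ℕ) + j + n) ((i : ℤ) - (j : ℤ) + n) : ℚ))) =
      (4 / (Nat.factorial 3 * Nat.factorial 5 : ℚ)) *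
        ((n + 1) * (n + 2) ^ 2 * (n + 3) * (2 * n + 3) * (2 * n + 5)) := by
  simp [Matrix.det_succ_row_zero, Fin.sum_univ_succ, Fin.succAbove]
  rw [keyc 0 0 n n ((n:ℕ):ℤ) (by ring) (by push_cast; ring)]
  rw [keyc 0 1 n (1+n) ((-1)+((n:ℕ):ℤ)) (by ring) (by push_cast; ring)]
  rw [keyc 0 2 n (2+n) ((-2)+((n:ℕ):ℤ)) (by ring) (by push_cast; ring)]
  rw [keyc 0 3 n (3+n) ((-3)+((n:ℕ):ℤ)) (by ring) (by push_cast; ring)]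
  rw [keyc 1 0 n (1+n) ((1)+((n:ℕ):ℤ)) (by ring) (by push_cast; ring)]
  rw [keyc 1 1 n (2+n) ((n:ℕ):ℤ) (by ring) (by push_cast; ring)]
  rw [keyc 1 2 n (3+n) ((-1)+((n:ℕ):ℤ)) (by ring) (by push_cast; ring)]
  rw [keyc 1 3 n (4+n) ((-2)+((n:ℕ):ℤ)) (by ring) (by push_cast; ring)]
  rw [keyc 2 0 n (2+n) ((2)+((n:ℕ):ℤ)) (by ring) (by push_cast; ring)]
  rw [keyc 2 1 n (3+n) ((1)+((n:ℕ):ℤ)) (by ring) (by push_cast; ring)]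
  rw [keyc 2 2 n (4+n) ((n:ℕ):ℤ) (by ring) (by push_cast; ring)]
  rw [keyc 2 3 n (5+n) ((-1)+((n:ℕ):ℤ)) (by ring) (by push_cast; ring)]
  rw [keyc 3 0 n (3+n) ((3)+((n:ℕ):ℤ)) (by ring) (by push_cast; ring)]
  rw [keyc 3 1 n (4+n) ((2)+((n:ℕ):ℤ)) (by ring) (by push_cast; ring)]
  rw [keyc 3 2 n (5+n) ((1)+((n:ℕ):ℤ)) (by ring) (by push_cast; ring)]
  rw [keyc 3 3 n (6+n) ((n:ℕ):ℤ) (by ring) (by push_cast; ring)]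
  norm_num [c2, c4, c6, Nat.factorial]
  push_cast
  ring
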